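/- Let p(z) = z⁴ - (3+√3 i)z² - √3 i t z - √3 i for nonzero t ∈ ℂ. If p has roots z₀ = r e^{iθ} (r > 0) and -1/z̄₀, then -e^{2iθ} + √3 i e^{-2iθ} - (r - 1/r)² e^{2iθ} = -(3 + √3 i); equivalently, r² - 1 + 1/r² - √3 sin 4θ - 3 cos 2θ - √3 sin 2θ = 0 and √3 sin 2θ = cos 4θ + cos 2θ. -/

import Mathlib

open Complex

/-- Vieta elimination for `p(z) = z⁴ - (3+√3 i)z² - √3 i t z - √3 i`: if `p` has roots
`z₀ = r e^{iθ}` (with `r > 0`) and `-1/z̄₀` together with two further roots `z₁, z₂`, then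
`-e^{2iθ} + √3 i e^{-2iθ} - (r-1/r)² e^{2iθ} = -(3+√3 i)`; equivalently the two real
equations `r² - 1 + 1/r² - √3 sin 4θ - 3 cos 2θ - √3 sin 2θ = 0` and
`√3 sin 2θ = cos 4θ + cos 2θ` hold. -/
theorem stmt17 (t : ℂ) (ht : t ≠ 0) (r θ : ℝ) (hr : 0 < r) (z₀ z₁ z₂ : ℂ)
    (hz₀ : z₀ = (r : ℂ) * Complex.exp (θ * Complex.I))
    (hfact : ∀ z : ℂ,
      z ^ 4 - (3 + (Real.sqrt 3 : ℂ) * Complex.I) * z ^ 2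
          - (Real.sqrt 3 : ℂ) * Complex.I * t * z - (Real.sqrt 3 : ℂ) * Complex.I
        = (z - z₀) * (z - (-1 / starRingEnd ℂ z₀)) * (z - z₁) * (z - z₂)) :
    (-Complex.exp (2 * θ * Complex.I) +
        (Real.sqrt 3 : ℂ) * Complex.I * Complex.exp (-(2 * θ) * Complex.I) -
        ((r : ℂ) - 1 / (r : ℂ)) ^ 2 * Complex.exp (2 * θ * Complex.I)
      = -(3 + (Real.sqrt 3 : ℂ) * Complex.I)) ∧
    (r ^ 2 - 1 + 1 / r ^ 2 - Real.sqrt 3 * Real.sin (4 * θ)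
        - 3 * Real.cos (2 * θ) - Real.sqrt 3 * Real.sin (2 * θ) = 0) ∧
    (Real.sqrt 3 * Real.sin (2 * θ) = Real.cos (4 * θ) + Real.cos (2 * θ)) := by
  have hrne : (r : ℂ) ≠ 0 := by exact_mod_cast hr.ne'
  set q : ℝ := Real.sqrt 3 with hqdef
  set v : ℂ := -1 / starRingEnd ℂ z₀ with hvdef
  have hzc : starRingEnd ℂ z₀ = (r : ℂ) * Complex.exp (-(θ * Complex.I)) := by
    rw [hz₀, map_mul, ← Complex.exp_conj]
    simp [Complex.conj_ofReal]
  have hee : Complex.exp (θ * Complex.I) * Complex.exp (-(θ * Complex.I)) = 1 := by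
    rw [← Complex.exp_add]; simp
  have hv : v = -(1 / (r : ℂ)) * Complex.exp (θ * Complex.I) := by
    rw [hvdef, hzc]
    field_simp
    linear_combination hee
  have hEsq : Complex.exp (θ * Complex.I) ^ 2 = Complex.exp (2 * θ * Complex.I) := by
    rw [sq, ← Complex.exp_add]; ring_nf
  have hEE : Complex.exp (2 * θ * Complex.I) * Complex.exp (-(2 * θ) * Complex.I) = 1 := by
    rw [← Complex.exp_add]; norm_num
  have huv : z₀ * v = -Complex.exp (2 * θ * Complex.I) := by
    rw [hz₀, hv, ← hEsq]
    field_simp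
  have hus : z₀ + v = ((r : ℂ) - 1 / (r : ℂ)) * Complex.exp (θ * Complex.I) := by
    rw [hz₀, hv]; ring
  have h0 := hfact 0
  have h1 := hfact 1
  have hm1 := hfact (-1)
  have h2 := hfact 2
  have hm2 := hfact (-2)
  have he1 : z₀ + v + z₁ + z₂ = 0 := by
    linear_combination (h2 - hm2 - 2 * h1 + 2 * hm1) / 12
  have he4 : z₀ * v * z₁ * z₂ = -((q : ℂ) * Complex.I) := by
    linear_combination -h0
  have he2 : z₀ * v + (z₀ + v) * (z₁ + z₂) + z₁ * z₂ = -(3 + (q : ℂ) * Complex.I) := by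
    linear_combination h0 - (h1 + hm1) / 2
  have hz12 : z₁ * z₂ = (q : ℂ) * Complex.I * Complex.exp (-(2 * θ) * Complex.I) := by
    linear_combination (-Complex.exp (-(2 * θ) * Complex.I)) * he4
      + Complex.exp (-(2 * θ) * Complex.I) * (z₁ * z₂) * huv
      - z₁ * z₂ * hEE
  have hG : -Complex.exp (2 * θ * Complex.I) +
        (q : ℂ) * Complex.I * Complex.exp (-(2 * θ) * Complex.I) -
        ((r : ℂ) - 1 / (r : ℂ)) ^ 2 * Complex.exp (2 * θ * Complex.I)
      = -(3 + (q : ℂ) * Complex.I) := by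
    linear_combination he2 - huv - hz12 - (z₀ + v) * he1
      + (z₀ + v + ((r : ℂ) - 1 / (r : ℂ)) * Complex.exp (θ * Complex.I)) * hus
      + ((r : ℂ) - 1 / (r : ℂ)) ^ 2 * hEsq
  have hcos2 : Complex.exp (2 * θ * Complex.I)
      = ((Real.cos (2*θ) : ℝ) : ℂ) + ((Real.sin (2*θ) : ℝ) : ℂ) * Complex.I := by
    rw [show (2 * (θ:ℂ) * Complex.I) = ((2*θ : ℝ) : ℂ) * Complex.I by push_cast; ring,
      Complex.exp_mul_I, ← Complex.ofReal_cos, ← Complex.ofReal_sin]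
  have hcosm2 : Complex.exp (-(2 * θ) * Complex.I)
      = ((Real.cos (2*θ) : ℝ) : ℂ) - ((Real.sin (2*θ) : ℝ) : ℂ) * Complex.I := by
    rw [show (-(2 * (θ:ℂ)) * Complex.I) = ((-(2*θ) : ℝ) : ℂ) * Complex.I by push_cast; ring,
      Complex.exp_mul_I, ← Complex.ofReal_cos, ← Complex.ofReal_sin]
    rw [Real.cos_neg, Real.sin_neg]
    push_cast
    ring
  set c : ℝ := Real.cos (2*θ) with hc
  set s : ℝ := Real.sin (2*θ) with hs
  set A : ℝ := (r - 1/r)^2 with hA'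
  have hG' := hG
  rw [hcos2, hcosm2] at hG'
  have hKey : ((-c + q*s - A*c + 3 : ℝ) : ℂ) + ((-s + q*c - A*s + q : ℝ) : ℂ) * Complex.I = 0 := by
    rw [hA']
    push_cast
    linear_combination hG' + (q:ℂ)*(s:ℂ)*Complex.I_sq
  have H1 : -c + q*s - A*c + 3 = 0 := by
    simpa using congrArg Complex.re hKey
  have H2 : -s + q*c - A*s + q = 0 := by
    simpa using congrArg Complex.im hKey
  have P : s^2 + c^2 = 1 := Real.sin_sq_add_cos_sq (2*θ)
  have hq3 : q * q = 3 := Real.mul_self_sqrt (by norm_num)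
  have hqpos : (0:ℝ) < q := Real.sqrt_pos.mpr (by norm_num)
  have hrne' : r ≠ 0 := hr.ne'
  have hA : A = r^2 - 2 + 1/r^2 := by rw [hA']; field_simp; ring
  refine ⟨hG, ?_, ?_⟩
  · rw [show (4*θ) = 2*(2*θ) by ring, Real.sin_two_mul, ← hc, ← hs]
    linear_combination (-c) * H1 - s * H2 - (1 + A) * P + hA + 4 * (mul_inv_cancel₀ hrne')
  · rw [show (4*θ) = 2*(2*θ) by ring, Real.cos_two_mul]
    apply mul_left_cancel₀ hqpos.ne'
    linear_combination s * H1 - c * H2 - q * P + s * hq3
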